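/- If dist_TD(S,T) = k and the maximal (S,T)-stable substrings of exemplar string S are X_1,…,X_l, then there exists a sequence of k tandem duplications transforming S into T such that no duplication cuts an occurrence of any X_j (i.e., every duplicated substring, at each step, is a concatenation of full occurrences of the X_j's). -/

import Mathlib

open scoped Classical

variable {α : Type*}

/-- A single tandem duplication: `AXB ⇒ AXXB` with `X` nonempty. -/
def TDStep (S T : List α) : Prop :=
  ∃ A X B : List α, X ≠ [] ∧ S = A ++ X ++ B ∧ T = A ++ X ++ X ++ B

/-- `TDk k S T`: `T` is obtained from `S` by exactly `k` tandem duplications. -/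
def TDk : ℕ → List α → List α → Prop
  | 0, S, T => S = T
  | n+1, S, T => ∃ U, TDStep S U ∧ TDk n U T

/-- The tandem duplication distance, `⊤` if `T` is not reachable from `S`. -/
noncomputable def distTD (S T : List α) : ℕ∞ :=
  sInf {n : ℕ∞ | ∃ m : ℕ, n = m ∧ TDk m S T}

/-- The pair `xy` is stable in `T`: every occurrence of `x` in `T` is followed
by `y`, and every occurrence of `y` is preceded by `x`. -/
def StablePair (x y : α) (T : List α) : Prop :=
  (∀ A B : List α, T = A ++ x :: B → ∃ B', B = y :: B') ∧
  (∀ A B : List α, T = A ++ y :: B → ∃ A', A = A' ++ [x])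

/-- The maximal `(S,T)`-stable substrings of `S`, obtained by splitting `S` at
every consecutive pair that is not stable in `T`. -/
noncomputable def blocks (S T : List α) : List (List α) :=
  S.splitBy (fun a b => decide (StablePair a b T))

/-- The number of maximal `(S,T)`-stable substrings of a nonempty `S`: one more
than the number of consecutive pairs of `S` that are not stable in `T`. -/
noncomputable def numStable (S T : List α) : ℕ :=
  (blocks S T).length

namespace Stmt15Aux

/-- one-sided "followed by" property -/
def Fol (x y : α) (W : List α) : Prop := ∀ P Q : List α, W = P ++ x :: Q → ∃ Q', Q = y :: Q'

theorem tdstep_reverse {U V : List α} (h : TDStep U V) : TDStep U.reverse V.reverse := by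
  obtain ⟨A, X, B, hX, hU, hV⟩ := h
  exact ⟨B.reverse, X.reverse, A.reverse, by simpa using hX, by simp [hU],
    by simp [hV]⟩

theorem fol_of_tdstep {U V : List α} (h : TDStep U V) {x y : α} (hf : Fol x y V) :
    Fol x y U := by
  obtain ⟨A, X, B, hX, hU, hV⟩ := h
  intro P Q hPQ
  have hU' : A ++ (X ++ B) = P ++ x :: Q := by
    rw [← hPQ, hU]; simp [List.append_assoc]
  rcases List.append_eq_append_iff.1 hU' with ⟨a', ha1, ha2⟩ | ⟨c', hc1, hc2⟩
  · -- P = A ++ a', X ++ B = a' ++ x :: Q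
    rcases List.append_eq_append_iff.1 ha2 with ⟨a₂, hb1, hb2⟩ | ⟨c₂, hb1, hb2⟩
    · -- a' = X ++ a₂, B = a₂ ++ x :: Q
      exact hf (A ++ X ++ X ++ a₂) Q (by simp [hV, hb2, List.append_assoc])
    · -- X = a' ++ c₂, x :: Q = c₂ ++ B
      cases c₂ with
      | nil =>
        have hB : B = x :: Q := by simpa using hb2.symm
        exact hf (A ++ X ++ X) Q (by simp [hV, hB, List.append_assoc])
      | cons z X₂ =>
        have hb2' : x :: Q = z :: (X₂ ++ B) := by simpa using hb2
        obtain ⟨hz, hQ⟩ := List.cons.inj hb2'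
        subst hz
        cases X₂ with
        | nil =>
          obtain ⟨Q', hQ'⟩ := hf (A ++ X ++ a') B
            (by simp [hV, hb1, List.append_assoc])
          exact ⟨Q', by simp [hQ, hQ']⟩
        | cons w X₃ =>
          obtain ⟨Q', hQ'⟩ := hf (A ++ a') (w :: (X₃ ++ X ++ B))
            (by simp [hV, hb1, List.append_assoc])
          obtain ⟨hw, -⟩ := List.cons.inj hQ'
          exact ⟨X₃ ++ B, by simp [hQ, hw]⟩
  · -- A = P ++ c', x :: Q = c' ++ (X ++ B)
    cases c' with
    | nil =>
      have hc1' : A = P := by simpa using hc1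
      cases X with
      | nil => exact absurd rfl hX
      | cons z X₂ =>
        have hc2' : x :: Q = z :: (X₂ ++ B) := by simpa using hc2
        obtain ⟨hz, hQ⟩ := List.cons.inj hc2'
        subst hz
        cases X₂ with
        | nil =>
          obtain ⟨Q', hQ'⟩ := hf (A ++ [x]) B (by simp [hV, hc1', List.append_assoc])
          exact ⟨Q', by simp [hQ, hQ']⟩
        | cons w X₃ =>
          obtain ⟨Q', hQ'⟩ := hf P (w :: (X₃ ++ (x :: w :: X₃) ++ B))
            (by simp [hV, hc1', List.append_assoc])
          obtain ⟨hw, -⟩ := List.cons.inj hQ'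
          exact ⟨X₃ ++ B, by simp [hQ, hw]⟩
    | cons z Q₁ =>
      have hc2' : x :: Q = z :: (Q₁ ++ (X ++ B)) := by simpa using hc2
      obtain ⟨hz, hQ⟩ := List.cons.inj hc2'
      subst hz
      cases Q₁ with
      | nil =>
        cases X with
        | nil => exact absurd rfl hX
        | cons w X₃ =>
          obtain ⟨Q', hQ'⟩ := hf P (w :: (X₃ ++ (w :: X₃) ++ B))
            (by simp [hV, hc1, List.append_assoc])
          obtain ⟨hw, -⟩ := List.cons.inj hQ'
          exact ⟨X₃ ++ B, by simp [hQ, hw]⟩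
      | cons w Q₂ =>
        obtain ⟨Q', hQ'⟩ := hf P (w :: (Q₂ ++ X ++ X ++ B))
          (by simp [hV, hc1, List.append_assoc])
        obtain ⟨hw, -⟩ := List.cons.inj hQ'
        exact ⟨Q₂ ++ (X ++ B), by simp [hQ, hw]⟩

theorem stablePair_snd_iff_fol {x y : α} {W : List α} :
    (∀ A B : List α, W = A ++ y :: B → ∃ A', A = A' ++ [x]) ↔ Fol y x W.reverse := by
  constructor
  · intro h P Q hPQ
    have hW : W = Q.reverse ++ y :: P.reverse := by
      rw [← List.reverse_reverse W, hPQ]; simp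
    obtain ⟨A', hA'⟩ := h _ _ hW
    refine ⟨A'.reverse, ?_⟩
    rw [← List.reverse_reverse Q, hA']; simp
  · intro h A B hAB
    obtain ⟨Q', hQ'⟩ := h B.reverse A.reverse (by rw [hAB]; simp)
    refine ⟨Q'.reverse, ?_⟩
    rw [← List.reverse_reverse A, hQ']; simp

theorem stablePair_of_tdstep {U V : List α} (h : TDStep U V) {x y : α}
    (hs : StablePair x y V) : StablePair x y U := by
  refine ⟨fol_of_tdstep h hs.1, ?_⟩
  rw [stablePair_snd_iff_fol]
  exact fol_of_tdstep (tdstep_reverse h) (stablePair_snd_iff_fol.1 hs.2)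

theorem stablePair_of_tdk {T : List α} {x y : α} :
    ∀ n (U : List α), TDk n U T → StablePair x y T → StablePair x y U
  | 0, U, h, hs => h ▸ hs
  | n+1, U, ⟨V, hst, h⟩, hs => stablePair_of_tdstep hst (stablePair_of_tdk n V h hs)

/-! ### Block machinery -/

/-- Expand a list of block indices into the corresponding string. -/
def expand (bs : List (List α)) (I : List ℕ) : List α := I.flatMap (fun j => bs.getD j [])

@[simp] theorem expand_nil (bs : List (List α)) : expand bs [] = [] := rfl

@[simp] theorem expand_cons (bs : List (List α)) (j : ℕ) (I : List ℕ) :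
    expand bs (j :: I) = bs.getD j [] ++ expand bs I := by
  simp [expand]

@[simp] theorem expand_append (bs : List (List α)) (I J : List ℕ) :
    expand bs (I ++ J) = expand bs I ++ expand bs J := by
  simp [expand]

theorem expand_range (bs : List (List α)) :
    expand bs (List.range bs.length) = bs.flatten := by
  rw [expand, List.flatMap_def]
  congr 1
  apply List.ext_getElem
  · simp
  · intro i h1 h2
    simp_all

theorem getD_mem {bs : List (List α)} {j : ℕ} (h : bs.getD j [] ≠ []) :
    bs.getD j [] ∈ bs := by
  by_cases hj : j < bs.length
  · rw [List.getD_eq_getElem?_getD, List.getElem?_eq_getElem hj]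
    exact List.getElem_mem hj
  · rw [List.getD_eq_getElem?_getD, List.getElem?_eq_none (by omega)] at h
    simp at h

/-- `x` is immediately followed by `y` inside some block. -/
def Pre (bs : List (List α)) (x y : α) : Prop := ∃ b ∈ bs, ∃ p q, b = p ++ x :: y :: q

theorem eq_of_mem_of_mem {bs : List (List α)} (hnod : bs.flatten.Nodup) :
    ∀ {b b' : List α} {x : α}, b ∈ bs → b' ∈ bs → x ∈ b → x ∈ b' → b = b' := by
  induction bs with
  | nil => intro b b' x h; cases h
  | cons hd tl ih =>
    intro b b' x hb hb' hx hx'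
    rw [List.flatten_cons, List.nodup_append] at hnod
    obtain ⟨h1, h2, h3⟩ := hnod
    rcases List.mem_cons.1 hb with rfl | hb2
    · rcases List.mem_cons.1 hb' with rfl | hb2'
      · rfl
      · exact absurd (List.mem_flatten.2 ⟨b', hb2', hx'⟩) (fun hm => h3 x hx x hm rfl)
    · rcases List.mem_cons.1 hb' with rfl | hb2'
      · exact absurd (List.mem_flatten.2 ⟨b, hb2, hx⟩) (fun hm => h3 x hx' x hm rfl)
      · exact ih h2 hb2 hb2' hx hx'

theorem nodup_of_mem {bs : List (List α)} (hnod : bs.flatten.Nodup) {b : List α}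
    (hb : b ∈ bs) : b.Nodup :=
  hnod.sublist (List.sublist_flatten_of_mem hb)

theorem not_pre_head {bs : List (List α)} (hnod : bs.flatten.Nodup) {b : List α} {y : α}
    {r : List α} (hb : b ∈ bs) (hbe : b = y :: r) (w : α) : ¬ Pre bs w y := by
  rintro ⟨b', hb', p, q, hb'e⟩
  have hbb : b = b' := eq_of_mem_of_mem hnod (x := y) hb hb' (by simp [hbe]) (by simp [hb'e])
  have hnb : (y :: r).Nodup := hbe ▸ nodup_of_mem hnod hb
  have heq : y :: r = p ++ w :: y :: q := by rw [← hbe, hbb, hb'e]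
  have hyr : y ∈ r := by
    cases p with
    | nil =>
      simp only [List.nil_append] at heq
      injection heq with h1 h2
      simp [h2]
    | cons z p' =>
      simp only [List.cons_append] at heq
      injection heq with h1 h2
      simp [h2]
  exact (List.nodup_cons.1 hnb).1 hyr

theorem head_init {bs : List (List α)} :
    ∀ (I : List ℕ) (W : List α) (x : α), expand bs I = x :: W →
      ∃ b ∈ bs, ∃ r, b = x :: r := by
  intro I
  induction I with
  | nil => intro W x h; simp at h
  | cons j I' ih =>
    intro W x h
    rcases hb : bs.getD j [] with _ | ⟨z, r⟩
    · exact ih _ x (by rw [expand_cons, hb, List.nil_append] at h; exact h)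
    · rw [expand_cons, hb] at h
      simp only [List.cons_append] at h
      injection h with h1 h2
      exact ⟨bs.getD j [], getD_mem (by rw [hb]; simp), r, by rw [hb, h1]⟩

theorem concat_last_eq {u v : List α} {x y : α} (h : u ++ [x] = v ++ [y]) : x = y := by
  have := congrArg List.reverse h
  simp at this
  exact this.1

theorem split (bs : List (List α)) (hnod : bs.flatten.Nodup) (V : List α)
    (hstab : ∀ a c, Pre bs a c → StablePair a c V) (c : α)
    (hc : ∀ w, ¬ Pre bs w c) :
    ∀ (I : List ℕ) (X B P Q : List α), expand bs I = X ++ B → X ≠ [] →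
      V = P ++ X ++ c :: Q →
      ∃ IX IB, I = IX ++ IB ∧ IX ≠ [] ∧ expand bs IX = X ∧ expand bs IB = B := by
  intro I
  induction I with
  | nil =>
    intro X B P Q he hX hV
    rw [expand_nil] at he
    exact absurd (List.append_eq_nil_iff.1 he.symm).1 hX
  | cons j I' ih =>
    intro X B P Q he hX hV
    by_cases hb : bs.getD j [] = []
    · obtain ⟨IX, IB, h1, h2, h3, h4⟩ := ih X B P Q
        (by rw [expand_cons, hb, List.nil_append] at he; exact he) hX hV
      exact ⟨j :: IX, IB, by simp [h1], by simp,
        by rw [expand_cons, hb, List.nil_append]; exact h3, h4⟩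
    · have hbm := getD_mem hb
      have he' : bs.getD j [] ++ expand bs I' = X ++ B := by simpa using he
      rcases List.append_eq_append_iff.1 he' with ⟨a', ha1, ha2⟩ | ⟨c', hc1, hc2⟩
      · -- X = getD ++ a', expand I' = a' ++ B
        by_cases ha : a' = []
        · subst ha
          exact ⟨[j], I', rfl, by simp, by simp [ha1], by simpa using ha2⟩
        · obtain ⟨IX, IB, h1, h2, h3, h4⟩ := ih a' B (P ++ bs.getD j []) Q ha2 ha
            (by rw [hV, ha1]; simp [List.append_assoc])
          exact ⟨j :: IX, IB, by simp [h1], by simp, by simp [h3, ha1], h4⟩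
      · -- getD = X ++ c', B = c' ++ expand I'
        cases c' with
        | nil =>
          refine ⟨[j], I', rfl, by simp, ?_, by rw [hc2, List.nil_append]⟩
          rw [expand_cons, expand_nil, List.append_nil, hc1, List.append_nil]
        | cons d D' =>
          exfalso
          obtain ⟨X₁, x₀, hX₁⟩ := (List.eq_nil_or_concat X).resolve_left hX
          rw [List.concat_eq_append] at hX₁
          have hpre : Pre bs x₀ d := ⟨_, hbm, X₁, D', by rw [hc1, hX₁]; simp⟩
          obtain ⟨Q', hQ'⟩ := (hstab _ _ hpre).1 (P ++ X₁) (c :: Q)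
            (by rw [hV, hX₁]; simp [List.append_assoc])
          have hcd : c = d := (List.cons.inj hQ').1
          exact hc x₀ (by rw [hcd]; exact hpre)

theorem align (bs : List (List α)) (hnod : bs.flatten.Nodup) (V : List α)
    (hstab : ∀ a c, Pre bs a c → StablePair a c V) :
    ∀ (n : ℕ) (I : List ℕ) (A X B C : List α), A.length + I.length ≤ n →
      expand bs I = A ++ X ++ B → X ≠ [] → V = C ++ A ++ X ++ X ++ B →
      ∃ IA IX IB, I = IA ++ IX ++ IB ∧ IX ≠ [] ∧
        expand bs (IA ++ IX ++ IX ++ IB) = A ++ X ++ X ++ B := by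
  intro n
  induction n with
  | zero =>
    intro I A X B C hlen he hX hV
    have hI : I = [] := by
      cases I with
      | nil => rfl
      | cons j I' => simp at hlen
    rw [hI, expand_nil] at he
    exact absurd (List.append_eq_nil_iff.1 (List.append_eq_nil_iff.1 he.symm).1).2 hX
  | succ n ih =>
    intro I A X B C hlen he hX hV
    cases A with
    | nil =>
      -- split path
      cases X with
      | nil => exact absurd rfl hX
      | cons x Xt =>
        obtain ⟨b, hbm, r, hbr⟩ := head_init I (Xt ++ B) x (by simpa using he)
        have hc := not_pre_head hnod hbm hbr
        obtain ⟨IX, IB, h1, h2, h3, h4⟩ := split bs hnod V hstab x hc I (x :: Xt) B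
          C (Xt ++ B) (by simpa using he) hX
          (by rw [hV]; simp [List.append_assoc])
        exact ⟨[], IX, IB, by simp [h1], h2, by simp [h3, h4]⟩
    | cons a₀ A' =>
      cases I with
      | nil =>
        rw [expand_nil] at he
        exact absurd (List.append_eq_nil_iff.1 (List.append_eq_nil_iff.1 he.symm).1).2 hX
      | cons j I' =>
        by_cases hb : bs.getD j [] = []
        · obtain ⟨IA, IX, IB, h1, h2, h3⟩ := ih I' (a₀ :: A') X B C
            (by simp at hlen ⊢; omega)
            (by rw [expand_cons, hb, List.nil_append] at he; exact he) hX hV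
          refine ⟨j :: IA, IX, IB, by simp [h1], h2, ?_⟩
          have e1 : (j :: IA) ++ IX ++ IX ++ IB = j :: (IA ++ IX ++ IX ++ IB) := by simp
          rw [e1, expand_cons, hb, List.nil_append]
          exact h3
        · have hbm := getD_mem hb
          have hblen : 1 ≤ (bs.getD j []).length := by
            cases hh : bs.getD j [] with
            | nil => exact absurd hh hb
            | cons z zs => simp [hh]
          have he' : bs.getD j [] ++ expand bs I' = (a₀ :: A') ++ (X ++ B) := by
            simpa [List.append_assoc] using he
          rcases List.append_eq_append_iff.1 he' with ⟨a', ha1, ha2⟩ | ⟨c', hb1, hb2⟩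
          · -- a₀ :: A' = getD ++ a', expand I' = a' ++ (X ++ B)
            have hlen' : a'.length + I'.length ≤ n := by
              have := congrArg List.length ha1
              simp only [List.length_cons, List.length_append] at this hlen
              omega
            obtain ⟨IA, IX, IB, h1, h2, h3⟩ := ih I' a' X B (C ++ bs.getD j []) hlen'
              (by simpa [List.append_assoc] using ha2) hX
              (by rw [hV, ha1]; simp [List.append_assoc])
            refine ⟨j :: IA, IX, IB, by simp [h1], h2, ?_⟩
            have e1 : (j :: IA) ++ IX ++ IX ++ IB = j :: (IA ++ IX ++ IX ++ IB) := by simp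
            rw [e1, expand_cons, h3, ha1]
            simp [List.append_assoc]
          · -- getD = (a₀ :: A') ++ c', X ++ B = c' ++ expand I'
            cases c' with
            | nil =>
              have hA : bs.getD j [] = a₀ :: A' := by simpa using hb1
              have hX2 : expand bs I' = X ++ B := by simpa using hb2.symm
              obtain ⟨IA, IX, IB, h1, h2, h3⟩ := ih I' [] X B (C ++ bs.getD j [])
                (by simp at hlen ⊢; omega) (by simpa using hX2) hX
                (by rw [hV, hA]; simp [List.append_assoc])
              refine ⟨j :: IA, IX, IB, by simp [h1], h2, ?_⟩
              have e1 : (j :: IA) ++ IX ++ IX ++ IB = j :: (IA ++ IX ++ IX ++ IB) := by simp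
              rw [e1, expand_cons, h3, hA]
              simp [List.append_assoc]
            | cons e E' =>
              -- shift the duplication window one step to the left
              cases X with
              | nil => exact absurd rfl hX
              | cons x₁ Xt =>
                have hb2' : x₁ :: (Xt ++ B) = e :: (E' ++ expand bs I') := by
                  simpa using hb2
                obtain ⟨hx₁, -⟩ := List.cons.inj hb2'
                obtain ⟨A₀, a, hA⟩ := (List.eq_nil_or_concat (a₀ :: A')).resolve_left (by simp)
                rw [List.concat_eq_append] at hA
                have hpre : Pre bs a e := ⟨_, hbm, A₀, E', by rw [hb1, hA]; simp⟩
                obtain ⟨A'', hA''⟩ := (hstab a e hpre).2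
                  (C ++ (a₀ :: A') ++ (x₁ :: Xt)) (Xt ++ B)
                  (by rw [hV, hx₁]; simp [List.append_assoc])
                obtain ⟨X₁, x₂, hX₂⟩ := (List.eq_nil_or_concat (x₁ :: Xt)).resolve_left (by simp)
                rw [List.concat_eq_append] at hX₂
                have hx₂ : x₂ = a := concat_last_eq (u := C ++ (a₀ :: A') ++ X₁) (v := A'')
                  (by rw [← hA'', hX₂]; simp [List.append_assoc])
                have hlen' : A₀.length + (j :: I').length ≤ n := by
                  have := congrArg List.length hA
                  simp at this hlen ⊢
                  omega
                have he2 : expand bs (j :: I') = A₀ ++ (a :: X₁) ++ (a :: B) := by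
                  rw [he, hA, hX₂, hx₂]; simp [List.append_assoc]
                have hV2 : V = C ++ A₀ ++ (a :: X₁) ++ (a :: X₁) ++ (a :: B) := by
                  rw [hV, hA, hX₂, hx₂]; simp [List.append_assoc]
                obtain ⟨IA, IX, IB, h1, h2, h3⟩ := ih (j :: I') A₀ (a :: X₁) (a :: B) C hlen'
                  he2 (by simp) hV2
                refine ⟨IA, IX, IB, h1, h2, ?_⟩
                rw [h3, hA, hX₂, hx₂]
                simp [List.append_assoc]

theorem step_lift (bs : List (List α)) (hnod : bs.flatten.Nodup) {U V : List α}
    (hstab : ∀ a c, Pre bs a c → StablePair a c V)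
    {I : List ℕ} (hI : expand bs I = U) (h : TDStep U V) :
    ∃ I', TDStep I I' ∧ expand bs I' = V := by
  obtain ⟨A, X, B, hX, hU, hV⟩ := h
  obtain ⟨IA, IX, IB, h1, h2, h3⟩ := align bs hnod V hstab (A.length + I.length) I A X B []
    (le_refl _) (by rw [hI, hU]) hX (by rw [hV]; simp)
  exact ⟨IA ++ IX ++ IX ++ IB, ⟨IA, IX, IB, h2, h1, rfl⟩, by rw [h3, ← hV]⟩

theorem main_lift (bs : List (List α)) (hnod : bs.flatten.Nodup) (T : List α)
    (hpre : ∀ a c, Pre bs a c → StablePair a c T) :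
    ∀ (k : ℕ) (U : List α) (I : List ℕ), expand bs I = U → TDk k U T →
      ∃ I', expand bs I' = T ∧ TDk k I I' := by
  intro k
  induction k with
  | zero =>
    intro U I hI h
    exact ⟨I, hI.trans h, rfl⟩
  | succ k ih =>
    intro U I hI h
    obtain ⟨V, hst, h⟩ := h
    have hstabV : ∀ a c, Pre bs a c → StablePair a c V := fun a c hp =>
      stablePair_of_tdk k V h (hpre a c hp)
    obtain ⟨I₁, hstep, hI₁⟩ := step_lift bs hnod hstabV hI hst
    obtain ⟨I', h1, h2⟩ := ih V I₁ hI₁ h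
    exact ⟨I', h1, I₁, hstep, h2⟩

end Stmt15Aux

theorem tdk_of_distTD {S T : List α} {k : ℕ} (h : distTD S T = (k : ℕ∞)) : TDk k S T := by
  have hne : {n : ℕ∞ | ∃ m : ℕ, n = m ∧ TDk m S T}.Nonempty := by
    by_contra hemp
    rw [Set.not_nonempty_iff_eq_empty] at hemp
    rw [distTD, hemp, sInf_empty] at h
    simp at h
  obtain ⟨n, m, rfl, hm⟩ := hne
  have hs : {m : ℕ | TDk m S T}.Nonempty := ⟨m, hm⟩
  have hmem : TDk (sInf {m : ℕ | TDk m S T}) S T := Nat.sInf_mem hs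
  have heq : distTD S T = ((sInf {m : ℕ | TDk m S T} : ℕ) : ℕ∞) := by
    apply le_antisymm
    · exact sInf_le ⟨_, rfl, hmem⟩
    · apply le_sInf
      rintro x ⟨m', rfl, hm'⟩
      exact_mod_cast Nat.sInf_le hm'
  rw [h] at heq
  have hk : k = sInf {m : ℕ | TDk m S T} := by exact_mod_cast heq
  rw [hk]
  exact hmem

/-- If `dist_TD(S,T) = k` with `S` exemplar, then there is a sequence of `k`
tandem duplications from `S` to `T` in which no duplication cuts an occurrence
of a maximal `(S,T)`-stable substring: equivalently, `T` is the expansion of a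
string `T'` of block indices reachable from `S' = [0, …, l-1]` by exactly `k`
tandem duplications performed at the level of whole blocks. -/
theorem stmt15 (S T : List α) (hS : S.Nodup) (k : ℕ)
    (h : distTD S T = (k : ℕ∞)) :
    ∃ T' : List ℕ,
      T'.flatMap (fun j => (blocks S T).getD j []) = T ∧
      TDk k (List.range (blocks S T).length) T' := by
  classical
  have hT : TDk k S T := tdk_of_distTD h
  have hfl : (blocks S T).flatten = S := List.flatten_splitBy _ _
  have hnod : (blocks S T).flatten.Nodup := by rw [hfl]; exact hS
  have hpre : ∀ a c, Stmt15Aux.Pre (blocks S T) a c → StablePair a c T := by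
    rintro a c ⟨b, hb, p, q, hbe⟩
    have hb' : b ∈ S.splitBy (fun a b => decide (StablePair a b T)) := hb
    have hch := List.isChain_of_mem_splitBy hb'
    rw [hbe, List.isChain_append_cons_cons] at hch
    exact of_decide_eq_true hch.2.1
  obtain ⟨I', h1, h2⟩ := Stmt15Aux.main_lift (blocks S T) hnod T hpre k S
    (List.range (blocks S T).length)
    ((Stmt15Aux.expand_range (blocks S T)).trans hfl) hT
  exact ⟨I', h1, h2⟩
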